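/- Every fuzzy right ideal of an AG-groupoid with left identity is a fuzzy left ideal: if μ : S → [0,1] satisfies μ(x*y) ≥ μ(x) for all x, y, then μ(x*y) ≥ μ(y) for all x, y. -/
import Mathlib

/-- Every fuzzy right ideal of an AG-groupoid with left identity is a
    fuzzy left ideal. -/
theorem fuzzy_right_ideal_is_left {S : Type*} (mul : S → S → S)
    (hinv : ∀ a b c : S, mul (mul a b) c = mul (mul c b) a)
    (e : S) (he : ∀ x : S, mul e x = x)
    (μ : S → ℝ) (hμ0 : ∀ x, 0 ≤ μ x) (hμ1 : ∀ x, μ x ≤ 1)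
    (hright : ∀ x y : S, μ x ≤ μ (mul x y)) :
    ∀ x y : S, μ y ≤ μ (mul x y) := by
  intro x y
  have key : mul x y = mul (mul y x) e := by
    calc mul x y = mul (mul e x) y := by rw [he]
    _ = mul (mul y x) e := hinv e x y
  rw [key]
  exact le_trans (hright y x) (hright (mul y x) e)
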